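/- For every k ≥ 3, the minimal polynomial over ℚ of the real number 4·sin²(π/2^k) equals (l (2^{k−2})).comp (2 − X), regarded as an element of ℚ[X]. -/

import Mathlib

open Polynomial Real

/-- Lucas-type polynomials: `l 0 = 2`, `l 1 = X`, `l n = X * l (n-1) - l (n-2)`. -/
noncomputable def lucPoly : ℕ → ℤ[X]
  | 0 => 2
  | 1 => X
  | (n + 2) => X * lucPoly (n + 1) - lucPoly n

theorem lucPoly_eq_dickson : ∀ n : ℕ, lucPoly n = dickson 1 1 n
  | 0 => by norm_num [lucPoly, dickson_zero]
  | 1 => rfl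
  | (n + 2) => by
    rw [show lucPoly (n + 2) = X * lucPoly (n + 1) - lucPoly n from rfl,
      dickson_add_two, lucPoly_eq_dickson (n + 1), lucPoly_eq_dickson n, C_1, one_mul]

theorem lucPoly_natDegree_le : ∀ n : ℕ, (lucPoly n).natDegree ≤ n
  | 0 => by simp [lucPoly]
  | 1 => by simp [lucPoly]
  | (n + 2) => by
    rw [show lucPoly (n + 2) = X * lucPoly (n + 1) - lucPoly n from rfl]
    refine le_trans (natDegree_sub_le _ _) (max_le ?_ ?_)
    · refine le_trans natDegree_mul_le ?_
      rw [natDegree_X]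
      have := lucPoly_natDegree_le (n + 1)
      omega
    · exact le_trans (lucPoly_natDegree_le n) (by omega)

theorem lucPoly_monic_natDegree :
    ∀ n : ℕ, (lucPoly (n + 1)).Monic ∧ (lucPoly (n + 1)).natDegree = n + 1
  | 0 => ⟨monic_X, natDegree_X⟩
  | (n + 1) => by
    obtain ⟨hm, hd⟩ := lucPoly_monic_natDegree n
    have hmul : (X * lucPoly (n + 1)).Monic := monic_X.mul hm
    have hmuld : (X * lucPoly (n + 1)).natDegree = n + 2 := by
      rw [monic_X.natDegree_mul hm, natDegree_X, hd]
      omega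
    have hnd : (lucPoly n).natDegree < (X * lucPoly (n + 1)).natDegree := by
      rw [hmuld]
      have := lucPoly_natDegree_le n
      omega
    have hlt : (lucPoly n).degree < (X * lucPoly (n + 1)).degree :=
      degree_lt_degree hnd
    have heq : lucPoly (n + 2) = X * lucPoly (n + 1) - lucPoly n := rfl
    constructor
    · rw [heq]; exact hmul.sub_of_left hlt
    · rw [heq, natDegree_sub_eq_left_of_natDegree_lt hnd, hmuld]

theorem lucPoly_eval_two : ∀ n : ℕ, (lucPoly n).eval 2 = 2
  | 0 => by simp [lucPoly]
  | 1 => by simp [lucPoly]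
  | (n + 2) => by
    rw [show lucPoly (n + 2) = X * lucPoly (n + 1) - lucPoly n from rfl]
    simp [lucPoly_eval_two (n + 1), lucPoly_eval_two n]

theorem lucPoly_eval_cos (θ : ℝ) : ∀ n : ℕ,
    ((lucPoly n).map (Int.castRingHom ℝ)).eval (2 * Real.cos θ) = 2 * Real.cos (n * θ)
  | 0 => by simp [lucPoly]
  | 1 => by simp [lucPoly]
  | (n + 2) => by
    rw [show lucPoly (n + 2) = X * lucPoly (n + 1) - lucPoly n from rfl]
    simp only [Polynomial.map_sub, Polynomial.map_mul, map_X, eval_sub, eval_mul, eval_X,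
      lucPoly_eval_cos θ (n + 1), lucPoly_eval_cos θ n]
    have h1 : ((n : ℝ) + 2) * θ = ((n + 1 : ℝ) * θ) + θ := by ring
    have h2 : (n : ℝ) * θ = ((n + 1 : ℝ) * θ) - θ := by ring
    push_cast
    rw [h1, h2, Real.cos_add, Real.cos_sub]
    ring

theorem lucPoly_map_zmod_two (m : ℕ) :
    (lucPoly (2 ^ m)).map (Int.castRingHom (ZMod 2)) = X ^ (2 ^ m) := by
  rw [lucPoly_eq_dickson, map_dickson, map_one]
  induction m with
  | zero => simp
  | succ m ih =>
    have : (2 : ℕ) ^ (m + 1) = 2 ^ m * 2 := by ring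
    rw [this, dickson_one_one_mul, dickson_one_one_zmod_p 2, ih, pow_comp, X_comp, ← pow_mul,
      Nat.mul_comm]

theorem minpoly_four_sin_sq_pow_two (k : ℕ) (hk : 3 ≤ k) :
    minpoly ℚ (4 * Real.sin (Real.pi / 2 ^ k) ^ 2) =
      ((lucPoly (2 ^ (k - 2))).comp (2 - X)).map (Int.castRingHom ℚ) := by
  set N : ℕ := 2 ^ (k - 2) with hN
  have hN2 : 2 ≤ N := by
    have : 1 ≤ k - 2 := by omega
    calc 2 = 2 ^ 1 := rfl
    _ ≤ 2 ^ (k - 2) := Nat.pow_le_pow_right (by norm_num) this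
  have hNeven : Even N := by
    refine (Nat.even_pow).mpr ⟨even_iff_two_dvd.mpr ⟨1, rfl⟩, by omega⟩
  obtain ⟨hmon, hdeg⟩ : (lucPoly N).Monic ∧ (lucPoly N).natDegree = N := by
    obtain ⟨n, hn⟩ : ∃ n, N = n + 1 := ⟨N - 1, by omega⟩
    rw [hn]
    exact lucPoly_monic_natDegree n
  set P : ℤ[X] := (lucPoly N).comp (2 - X) with hP
  -- degree of 2 - X
  have hC2 : (C 2 : ℤ[X]) = 2 := by norm_num
  have h2X : (2 - X : ℤ[X]) = -(X - C 2) := by rw [hC2]; ring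
  have h2Xdeg : (2 - X : ℤ[X]).natDegree = 1 := by
    rw [h2X, natDegree_neg, natDegree_X_sub_C]
  have h2Xlead : (2 - X : ℤ[X]).leadingCoeff = -1 := by
    rw [h2X, leadingCoeff_neg, leadingCoeff, natDegree_X_sub_C]
    simp
  have hPdeg : P.natDegree = N := by
    rw [hP, natDegree_comp, hdeg, h2Xdeg, mul_one]
  have hPmonic : P.Monic := by
    unfold Polynomial.Monic
    rw [hP, leadingCoeff_comp (by rw [h2Xdeg]; norm_num), h2Xlead, hmon, hdeg, one_mul,
      hNeven.neg_one_pow]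
  -- constant coefficient
  have hP0 : P.coeff 0 = 2 := by
    rw [hP, coeff_zero_eq_eval_zero, eval_comp]
    simp [lucPoly_eval_two]
  -- reduction mod 2
  have hPmod : P.map (Int.castRingHom (ZMod 2)) = X ^ N := by
    rw [hP, Polynomial.map_comp, lucPoly_map_zmod_two]
    have hmap2 : ((2 : ℤ[X]) - X).map (Int.castRingHom (ZMod 2)) = -X := by
      rw [Polynomial.map_sub, Polynomial.map_ofNat, map_X]
      rw [← map_ofNat (C : ZMod 2 →+* (ZMod 2)[X]) 2, show (2 : ZMod 2) = 0 from rfl,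
        map_zero, zero_sub]
    rw [hmap2, pow_comp, X_comp, hNeven.neg_pow]
  have hcoeffdvd : ∀ n : ℕ, n < N → (2 : ℤ) ∣ P.coeff n := by
    intro n hn
    have := congrArg (fun q => Polynomial.coeff q n) hPmod
    simp only [coeff_map, coeff_X_pow, eq_intCast] at this
    rw [if_neg (by omega)] at this
    exact (ZMod.intCast_zmod_eq_zero_iff_dvd _ 2).mp this
  -- Eisenstein
  have hirr : Irreducible P := by
    refine irreducible_of_eisenstein_criterion
      (Ideal.span_singleton_prime (by norm_num : (2:ℤ) ≠ 0) |>.mpr Int.prime_two) ?_ ?_ ?_ ?_ ?_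
    · rw [hPmonic.leadingCoeff, Ideal.mem_span_singleton]
      norm_num
    · intro n hn
      rw [Ideal.mem_span_singleton]
      refine hcoeffdvd n ?_
      rw [degree_eq_natDegree hPmonic.ne_zero, hPdeg] at hn
      exact_mod_cast hn
    · rw [degree_eq_natDegree hPmonic.ne_zero, hPdeg]
      exact_mod_cast Nat.lt_of_lt_of_le (by norm_num) hN2
    · rw [hP0, Ideal.span_singleton_pow, Ideal.mem_span_singleton]
      norm_num
    · exact hPmonic.isPrimitive
  have hirrQ : Irreducible (P.map (Int.castRingHom ℚ)) :=
    (Polynomial.IsPrimitive.Int.irreducible_iff_irreducible_map_cast hPmonic.isPrimitive).mp hirr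
  have hmonQ : (P.map (Int.castRingHom ℚ)).Monic := hPmonic.map _
  -- the root
  have hroot : (Polynomial.aeval (4 * Real.sin (Real.pi / 2 ^ k) ^ 2))
      (P.map (Int.castRingHom ℚ)) = 0 := by
    rw [aeval_def, eval₂_eq_eval_map, Polynomial.map_map]
    have hcomp : (algebraMap ℚ ℝ).comp (Int.castRingHom ℚ) = Int.castRingHom ℝ := by
      ext1; simp
    rw [hcomp, hP, Polynomial.map_comp, eval_comp]
    have hsub : Polynomial.eval (4 * Real.sin (Real.pi / 2 ^ k) ^ 2)
        (((2 : ℤ[X]) - X).map (Int.castRingHom ℝ)) = 2 * Real.cos (2 * (Real.pi / 2 ^ k)) := by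
      simp only [Polynomial.map_sub, Polynomial.map_ofNat, map_X, eval_sub, eval_ofNat, eval_X]
      have := Real.sin_sq_add_cos_sq (Real.pi / 2 ^ k)
      rw [Real.cos_two_mul]
      nlinarith
    rw [hsub, lucPoly_eval_cos]
    have : (N : ℝ) * (2 * (Real.pi / 2 ^ k)) = Real.pi / 2 := by
      have hk' : k = (k - 2) + 2 := by omega
      rw [hN]
      push_cast
      rw [hk', pow_add]
      have h2 : (0:ℝ) < 2 ^ (k - 2) := by positivity
      field_simp
      ring_nf
      simp
    rw [this, Real.cos_pi_div_two, mul_zero]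
  exact (minpoly.eq_of_irreducible_of_monic hirrQ hroot hmonQ).symm
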